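/- Assume 𝒢 is connected and let λ_N = max_{f ∈ 𝒮_p} ℛ(f) be the largest variational eigenvalue of ℋ_p. Then 𝒢 is bipartite if and only if there exists an eigenfunction of ℋ_p associated with λ_N that induces exactly N nodal domains. -/

import Mathlib

noncomputable section

open Finset

/-- `φ_p(x) = |x|^{p-2} x` (real exponent, `φ_p(0) = 0`). -/
def phiP (p x : ℝ) : ℝ := |x| ^ (p - 2) * x

/-- The generalized `p`-Laplacian `ℋ_p`.  The edge-weight function `ω` is assumed to be
symmetric and to vanish on pairs of non-adjacent vertices, so the sum over all vertices
is the sum over the neighbours of `u`. -/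
def genLap {V : Type*} [Fintype V] (ω : V → V → ℝ) (κ : V → ℝ) (p : ℝ)
    (f : V → ℝ) (u : V) : ℝ :=
  (∑ v : V, ω u v * phiP p (f u - f v)) + κ u * phiP p (f u)

/-- `(lam, f)` is an eigenpair of `ℋ_p`. -/
def IsEigenpair {V : Type*} [Fintype V] (ω : V → V → ℝ) (κ ϱ : V → ℝ) (p lam : ℝ)
    (f : V → ℝ) : Prop :=
  f ≠ 0 ∧ ∀ u, genLap ω κ p f u = lam * (ϱ u * phiP p (f u))

/-- The Rayleigh quotient `ℛ` of `ℋ_p` (each edge `uv` is counted once: the double sum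
counts it twice, whence the factor `1/2`). -/
def rayleigh {V : Type*} [Fintype V] (ω : V → V → ℝ) (κ ϱ : V → ℝ) (p : ℝ)
    (f : V → ℝ) : ℝ :=
  ((1 / 2) * ∑ u : V, ∑ v : V, ω u v * |f u - f v| ^ p + ∑ u : V, κ u * |f u| ^ p) /
    ∑ u : V, ϱ u * |f u| ^ p

/-- The `p`-sphere `𝒮_p`. -/
def pSphere (V : Type*) [Fintype V] (p : ℝ) : Set (V → ℝ) := {f | ∑ u : V, |f u| ^ p = 1}

/-- The Krasnoselskii genus of a (symmetric) subset of `ℝ^V`. -/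
def krasGenus {V : Type*} [Fintype V] (A : Set (V → ℝ)) : ℕ∞ :=
  sInf {n : ℕ∞ | ∃ k : ℕ, n = (k : ℕ∞) ∧ ∃ φ : (V → ℝ) → (Fin k → ℝ),
    ContinuousOn φ A ∧ (∀ x ∈ A, φ (-x) = -φ x) ∧ ∀ x ∈ A, φ x ≠ 0}

/-- The `k`-th variational eigenvalue of `ℋ_p`: the min over closed symmetric subsets of the
`p`-sphere of genus at least `k` of the max of the Rayleigh quotient. -/
def varEig {V : Type*} [Fintype V] (ω : V → V → ℝ) (κ ϱ : V → ℝ) (p : ℝ) (k : ℕ) : ℝ :=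
  sInf {r : ℝ | ∃ A : Set (V → ℝ), A ⊆ pSphere V p ∧ IsClosed A ∧ (∀ f ∈ A, -f ∈ A) ∧
    (k : ℕ∞) ≤ krasGenus A ∧ IsGreatest (rayleigh ω κ ϱ p '' A) r}

/-- The subgraph `𝒢₊(f)`: vertices where `f ≠ 0`, edges where `f` has equal nonzero signs. -/
def posGraph {V : Type*} (G : SimpleGraph V) (f : V → ℝ) : SimpleGraph V where
  Adj u v := G.Adj u v ∧ 0 < f u * f v
  symm := by
    constructor
    intro u v h
    exact ⟨h.1.symm, by rw [mul_comm]; exact h.2⟩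
  loopless := ⟨fun u h => G.loopless.irrefl u h.1⟩

/-- The number `ν(f)` of (strong) nodal domains of `f`: the number of connected components of
`𝒢₊(f)` consisting of vertices where `f` is nonzero. -/
def nodalCount {V : Type*} (G : SimpleGraph V) (f : V → ℝ) : ℕ :=
  {c : (posGraph G f).ConnectedComponent |
    ∀ u, (posGraph G f).connectedComponentMk u = c → f u ≠ 0}.ncard

/-- The subgraph of edges on which `f` changes sign. -/
def negGraph {V : Type*} (G : SimpleGraph V) (f : V → ℝ) : SimpleGraph V where
  Adj u v := G.Adj u v ∧ f u * f v < 0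
  symm := by
    constructor
    intro u v h
    exact ⟨h.1.symm, by rw [mul_comm]; exact h.2⟩
  loopless := ⟨fun u h => G.loopless.irrefl u h.1⟩

/-- `ζ(f)`: the number of edges on which `f` changes sign. -/
def zetaCount {V : Type*} [Fintype V] (G : SimpleGraph V) (f : V → ℝ) : ℕ :=
  (negGraph G f).edgeSet.ncard

/-- `z(f)`: the number of vertices where `f` vanishes. -/
def zeroCount {V : Type*} [Fintype V] (f : V → ℝ) : ℕ := {u : V | f u = 0}.ncard

/-- `l(f)`: the number of independent loops (cycle rank) of `𝒢₊(f)`,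
`|E(𝒢₊(f))| − |V(𝒢₊(f))| + ν(f)`. -/
def loopCount {V : Type*} [Fintype V] (G : SimpleGraph V) (f : V → ℝ) : ℤ :=
  ((posGraph G f).edgeSet.ncard : ℤ) - ({u : V | f u ≠ 0}.ncard : ℤ) + (nodalCount G f : ℤ)

/-- The subgraph `𝒢'(f)` of `𝒢` induced on the support of `f` (vertices with `f = 0` are
deleted together with all incident edges; in this encoding they are kept as isolated
vertices, which are discarded in the counts below). -/
def suppGraph {V : Type*} (G : SimpleGraph V) (f : V → ℝ) : SimpleGraph V where
  Adj u v := G.Adj u v ∧ f u ≠ 0 ∧ f v ≠ 0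
  symm := by
    constructor
    intro u v h
    exact ⟨h.1.symm, h.2.2, h.2.1⟩
  loopless := ⟨fun u h => G.loopless.irrefl u h.1⟩

/-- `c(f)`: the number of connected components of `𝒢'(f)`. -/
def compCount {V : Type*} (G : SimpleGraph V) (f : V → ℝ) : ℕ :=
  {c : (suppGraph G f).ConnectedComponent |
    ∀ u, (suppGraph G f).connectedComponentMk u = c → f u ≠ 0}.ncard

/-- `β'(f)`: the number of independent loops of `𝒢'(f)`,
`|E(𝒢'(f))| − |V(𝒢'(f))| + c(f)`. -/
def betaSupp {V : Type*} [Fintype V] (G : SimpleGraph V) (f : V → ℝ) : ℤ :=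
  ((suppGraph G f).edgeSet.ncard : ℤ) - ({u : V | f u ≠ 0}.ncard : ℤ) + (compCount G f : ℤ)

lemma phiP_pm (p c x : ℝ) (hc : |c| = 1) : phiP p (c * x) = c * phiP p x := by
  unfold phiP
  rw [abs_mul, hc, one_mul]; ring

lemma phiP_eq_zero_iff {p x : ℝ} : phiP p x = 0 ↔ x = 0 := by
  constructor
  · intro h
    by_contra hx
    have h1 : 0 < |x| := abs_pos.mpr hx
    have h2 : 0 < |x| ^ (p - 2) := Real.rpow_pos_of_pos h1 _
    exact (mul_ne_zero h2.ne' hx) h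
  · intro h; simp [phiP, h]

lemma phiP_abs_nonneg (p x : ℝ) : 0 ≤ phiP p |x| :=
  mul_nonneg (Real.rpow_nonneg (abs_nonneg _) _) (abs_nonneg _)

lemma phiP_neg (p x : ℝ) : phiP p (-x) = - phiP p x := by
  simp [phiP]

lemma phiP_deriv {p : ℝ} (hp : 1 < p) (x : ℝ) :
    HasDerivAt (fun y : ℝ => |y| ^ p) (p * phiP p x) x := by
  have h := hasDerivAt_abs_rpow x hp
  convert h using 1
  unfold phiP; ring

lemma phiP_deriv_affine {p : ℝ} (hp : 1 < p) (a c t₀ : ℝ) :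
    HasDerivAt (fun t : ℝ => |a + t * c| ^ p) (p * phiP p (a + t₀ * c) * c) t₀ := by
  have h1 : HasDerivAt (fun t : ℝ => a + t * c) c t₀ := by
    simpa using ((hasDerivAt_id t₀).mul_const c).const_add a
  exact (phiP_deriv hp (a + t₀ * c)).comp t₀ h1

lemma sphere_ne_zero {V : Type*} [Fintype V] {p : ℝ} (hp : 1 < p) {g : V → ℝ}
    (hg : g ∈ pSphere V p) : g ≠ 0 := by
  intro h
  rw [h] at hg
  simp only [pSphere, Set.mem_setOf_eq, Pi.zero_apply, abs_zero] at hg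
  rw [Real.zero_rpow (by linarith)] at hg
  simp at hg

lemma denom_pos {V : Type*} [Fintype V] {p : ℝ} (hp : 1 < p) {ϱ : V → ℝ}
    (hϱ : ∀ u, 0 < ϱ u) {g : V → ℝ} (hg : g ≠ 0) :
    0 < ∑ u : V, ϱ u * |g u| ^ p := by
  obtain ⟨u, hu⟩ : ∃ u, g u ≠ 0 := by
    by_contra h
    push_neg at h
    exact hg (funext h)
  apply Finset.sum_pos'
  · intro w _
    exact mul_nonneg (hϱ w).le (Real.rpow_nonneg (abs_nonneg _) _)
  · exact ⟨u, Finset.mem_univ u,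
      mul_pos (hϱ u) (Real.rpow_pos_of_pos (abs_pos.mpr hu) _)⟩

lemma maximizer_eigen {V : Type*} [Fintype V] (ω : V → V → ℝ) (κ ϱ : V → ℝ) {p : ℝ}
    (hp : 1 < p) (hωsymm : ∀ u v, ω u v = ω v u) (hϱpos : ∀ u, 0 < ϱ u) (lamN : ℝ)
    (g : V → ℝ) (hg : g ∈ pSphere V p)
    (hmax : ∀ f : V → ℝ, f ≠ 0 → rayleigh ω κ ϱ p f ≤ lamN)
    (hRg : rayleigh ω κ ϱ p g = lamN) :
    ∀ u, genLap ω κ p g u = lamN * (ϱ u * phiP p (g u)) := by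
  classical
  intro u
  have hgne : g ≠ 0 := sphere_ne_zero hp hg
  set e : V → ℝ := fun w => if w = u then 1 else 0 with he
  set Nf : ℝ → ℝ := fun t =>
    (1 / 2) * ∑ v : V, ∑ w : V, ω v w * |(g v - g w) + t * (e v - e w)| ^ p
      + ∑ w : V, κ w * |g w + t * e w| ^ p with hNf
  set D : ℝ → ℝ := fun t => ∑ w : V, ϱ w * |g w + t * e w| ^ p with hD
  have hray : ∀ t : ℝ, rayleigh ω κ ϱ p (g + t • e) = Nf t / D t := by
    intro t
    have h3 : ∀ v w : V, |g v + t * e v - (g w + t * e w)| = |(g v - g w) + t * (e v - e w)| := by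
      intro v w; congr 1; ring
    unfold rayleigh
    rw [hNf, hD]
    simp only [Pi.add_apply, Pi.smul_apply, smul_eq_mul, h3]
  -- derivative of D
  have hDval : ∀ w : V, ϱ w * (p * phiP p (g w + 0 * e w) * e w)
      = if w = u then p * (ϱ u * phiP p (g u)) else 0 := by
    intro w; by_cases h : w = u
    · subst h; simp [he]; ring
    · simp [he, h]
  have hD' : HasDerivAt D (p * (ϱ u * phiP p (g u))) 0 := by
    have h1 : ∀ w ∈ Finset.univ (α := V), HasDerivAt (fun t : ℝ => ϱ w * |g w + t * e w| ^ p)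
        (ϱ w * (p * phiP p (g w + 0 * e w) * e w)) 0 :=
      fun w _ => (phiP_deriv_affine hp (g w) (e w) 0).const_mul (ϱ w)
    have h2 := HasDerivAt.fun_sum h1
    have h4 : (∑ w : V, ϱ w * (p * phiP p (g w + 0 * e w) * e w))
        = p * (ϱ u * phiP p (g u)) := by
      rw [Finset.sum_congr rfl fun w _ => hDval w]
      simp
    rw [hD]; rw [← h4]; exact h2
  -- derivative of Nf
  have hN' : HasDerivAt Nf (p * genLap ω κ p g u) 0 := by
    have hedge : ∀ v ∈ Finset.univ (α := V),
        HasDerivAt (fun t : ℝ => ∑ w : V, ω v w * |(g v - g w) + t * (e v - e w)| ^ p)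
        (∑ w : V, ω v w * (p * phiP p ((g v - g w) + 0 * (e v - e w)) * (e v - e w))) 0 :=
      fun v _ => HasDerivAt.fun_sum
        (fun w _ => (phiP_deriv_affine hp (g v - g w) (e v - e w) 0).const_mul (ω v w))
    have h1 := (HasDerivAt.fun_sum hedge).const_mul ((1:ℝ)/2)
    have hkap : ∀ w ∈ Finset.univ (α := V),
        HasDerivAt (fun t : ℝ => κ w * |g w + t * e w| ^ p)
        (κ w * (p * phiP p (g w + 0 * e w) * e w)) 0 :=
      fun w _ => (phiP_deriv_affine hp (g w) (e w) 0).const_mul (κ w)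
    have h2 := HasDerivAt.fun_sum hkap
    have h3 := h1.add h2
    have hval : (1:ℝ)/2 * (∑ v : V, ∑ w : V,
          ω v w * (p * phiP p ((g v - g w) + 0 * (e v - e w)) * (e v - e w)))
        + ∑ w : V, κ w * (p * phiP p (g w + 0 * e w) * e w)
        = p * genLap ω κ p g u := by
      simp only [zero_mul, add_zero]
      set S : ℝ := ∑ w : V, ω u w * phiP p (g u - g w) with hSdef
      have hA : ∀ v : V, (∑ w : V, ω v w * (p * phiP p (g v - g w) * (e v - e w)))
          = (if v = u then p * S else 0) - p * ω v u * phiP p (g v - g u) := by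
        intro v
        by_cases hv : v = u
        · rw [hv, if_pos rfl]
          have hterm : ∀ w : V, ω u w * (p * phiP p (g u - g w) * (e u - e w))
              = p * (ω u w * phiP p (g u - g w))
                - (if w = u then p * ω u u * phiP p (g u - g u) else 0) := by
            intro w; by_cases hw : w = u
            · subst hw; simp [he]; ring
            · simp [he, hw]; ring
          rw [Finset.sum_congr rfl fun w _ => hterm w, Finset.sum_sub_distrib]
          simp only [Finset.sum_ite_eq', Finset.mem_univ, if_true, ← Finset.mul_sum]
          rw [← hSdef]
        · have hterm : ∀ w : V, ω v w * (p * phiP p (g v - g w) * (e v - e w))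
              = - (if w = u then p * ω v u * phiP p (g v - g u) else 0) := by
            intro w; by_cases hw : w = u
            · subst hw; simp [he, hv]; ring
            · simp [he, hw, hv]
          rw [Finset.sum_congr rfl fun w _ => hterm w, Finset.sum_neg_distrib]
          simp [hv]
      have hB : (∑ v : V, ω v u * phiP p (g v - g u)) = -S := by
        rw [hSdef, ← Finset.sum_neg_distrib]
        apply Finset.sum_congr rfl
        intro v _
        rw [hωsymm v u, show g v - g u = -(g u - g v) by ring, phiP_neg]
        ring
      have hC : ∀ w : V, κ w * (p * phiP p (g w) * e w)
          = if w = u then p * (κ u * phiP p (g u)) else 0 := by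
        intro w; by_cases hw : w = u
        · subst hw; simp [he]; ring
        · simp [he, hw]
      rw [Finset.sum_congr rfl fun v _ => hA v, Finset.sum_sub_distrib,
        Finset.sum_congr rfl fun w _ => hC w]
      simp only [Finset.sum_ite_eq', Finset.mem_univ, if_true]
      have hB2 : (∑ v : V, p * ω v u * phiP p (g v - g u)) = p * (-S) := by
        rw [← hB, Finset.mul_sum]
        apply Finset.sum_congr rfl
        intro v _; ring
      rw [hB2]
      unfold genLap
      rw [← hSdef]
      ring
    rw [hNf, ← hval]
    exact h3
  have hDpos : 0 < D 0 := by
    have hD0 : D 0 = ∑ w : V, ϱ w * |g w| ^ p := by rw [hD]; simp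
    rw [hD0]; exact denom_pos hp hϱpos hgne
  have hN0 : Nf 0 = lamN * D 0 := by
    have h0 : rayleigh ω κ ϱ p g = Nf 0 / D 0 := by
      have h := hray 0
      simpa using h
    rw [hRg] at h0
    field_simp at h0
    linarith [h0]
  have hlocmax : IsLocalMax (fun t => Nf t / D t) 0 := by
    have hev : ∀ᶠ t in nhds (0:ℝ), 0 < D t :=
      hD'.continuousAt.eventually (eventually_gt_nhds hDpos)
    filter_upwards [hev] with t ht
    have hne : g + t • e ≠ 0 := by
      intro h
      have hz : D t = 0 := by
        rw [hD]
        apply Finset.sum_eq_zero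
        intro w _
        have hw : g w + t * e w = 0 := by
          have := congrFun h w
          simpa using this
        rw [hw, abs_zero, Real.zero_rpow (by linarith : p ≠ 0), mul_zero]
      linarith
    calc Nf t / D t = rayleigh ω κ ϱ p (g + t • e) := (hray t).symm
      _ ≤ lamN := hmax _ hne
      _ = Nf 0 / D 0 := by rw [hN0]; field_simp
  have hQ : HasDerivAt (fun t => Nf t / D t)
      ((p * genLap ω κ p g u * D 0 - Nf 0 * (p * (ϱ u * phiP p (g u)))) / D 0 ^ 2) 0 :=
    hN'.div hD' hDpos.ne'
  have hz := hlocmax.hasDerivAt_eq_zero hQ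
  have hnum : p * genLap ω κ p g u * D 0 - Nf 0 * (p * (ϱ u * phiP p (g u))) = 0 :=
    (div_eq_zero_iff.mp hz).resolve_right (pow_ne_zero 2 hDpos.ne')
  rw [hN0] at hnum
  have hp0 : (p : ℝ) ≠ 0 := by linarith
  have hfin : genLap ω κ p g u * (p * D 0)
      = (lamN * (ϱ u * phiP p (g u))) * (p * D 0) := by linear_combination hnum
  exact mul_right_cancel₀ (mul_ne_zero hp0 hDpos.ne') hfin

lemma rayleigh_smul {V : Type*} [Fintype V] (ω : V → V → ℝ) (κ ϱ : V → ℝ) {p : ℝ}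
    (c : ℝ) (hc : c ≠ 0) (f : V → ℝ) :
    rayleigh ω κ ϱ p (c • f) = rayleigh ω κ ϱ p f := by
  have hcp : (0:ℝ) < |c| ^ p := Real.rpow_pos_of_pos (abs_pos.mpr hc) p
  have habs : ∀ x : ℝ, |c * x| ^ p = |c| ^ p * |x| ^ p := by
    intro x; rw [abs_mul, Real.mul_rpow (abs_nonneg _) (abs_nonneg _)]
  unfold rayleigh
  have h1 : ∀ u v : V, (c • f) u - (c • f) v = c * (f u - f v) := by
    intro u v; simp [mul_sub]
  simp only [h1]
  simp only [Pi.smul_apply, smul_eq_mul]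
  simp only [habs]
  have e1 : ∑ u : V, ∑ v : V, ω u v * (|c| ^ p * |f u - f v| ^ p)
      = |c| ^ p * ∑ u : V, ∑ v : V, ω u v * |f u - f v| ^ p := by
    rw [Finset.mul_sum]
    refine Finset.sum_congr rfl fun u _ => ?_
    rw [Finset.mul_sum]
    exact Finset.sum_congr rfl fun v _ => by ring
  have e2 : ∑ u : V, κ u * (|c| ^ p * |f u| ^ p)
      = |c| ^ p * ∑ u : V, κ u * |f u| ^ p := by
    rw [Finset.mul_sum]; exact Finset.sum_congr rfl fun u _ => by ring
  have e3 : ∑ u : V, ϱ u * (|c| ^ p * |f u| ^ p)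
      = |c| ^ p * ∑ u : V, ϱ u * |f u| ^ p := by
    rw [Finset.mul_sum]; exact Finset.sum_congr rfl fun u _ => by ring
  rw [e1, e2, e3,
    show (1:ℝ)/2 * (|c| ^ p * ∑ u : V, ∑ v : V, ω u v * |f u - f v| ^ p)
        + |c| ^ p * ∑ u : V, κ u * |f u| ^ p
      = |c| ^ p * ((1:ℝ)/2 * (∑ u : V, ∑ v : V, ω u v * |f u - f v| ^ p)
        + ∑ u : V, κ u * |f u| ^ p) from by ring,
    mul_div_mul_left _ _ hcp.ne']

lemma rayleigh_le {V : Type*} [Fintype V] (ω : V → V → ℝ) (κ ϱ : V → ℝ) {p : ℝ}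
    (hp : 1 < p) (lamN : ℝ)
    (hlamN : IsGreatest (rayleigh ω κ ϱ p '' pSphere V p) lamN)
    (f : V → ℝ) (hf : f ≠ 0) : rayleigh ω κ ϱ p f ≤ lamN := by
  obtain ⟨u, hu⟩ : ∃ u, f u ≠ 0 := by
    by_contra h; push_neg at h; exact hf (funext h)
  set s := ∑ u : V, |f u| ^ p with hs
  have hspos : 0 < s := by
    apply Finset.sum_pos'
    · exact fun w _ => Real.rpow_nonneg (abs_nonneg _) _
    · exact ⟨u, Finset.mem_univ u, Real.rpow_pos_of_pos (abs_pos.mpr hu) _⟩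
  set c := s ^ (-(1/p)) with hcdef
  have hc : 0 < c := Real.rpow_pos_of_pos hspos _
  have hp0 : p ≠ 0 := by linarith
  have hcp : |c| ^ p = s⁻¹ := by
    rw [abs_of_pos hc, hcdef, ← Real.rpow_mul hspos.le,
      show -(1/p) * p = -1 by field_simp, Real.rpow_neg hspos.le, Real.rpow_one]
  have hmem : c • f ∈ pSphere V p := by
    unfold pSphere
    simp only [Set.mem_setOf_eq, Pi.smul_apply, smul_eq_mul]
    have habs : ∀ x : ℝ, |c * x| ^ p = |c| ^ p * |x| ^ p := by
      intro x; rw [abs_mul, Real.mul_rpow (abs_nonneg _) (abs_nonneg _)]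
    simp only [habs]
    rw [← Finset.mul_sum, hcp, ← hs]
    exact inv_mul_cancel₀ hspos.ne'
  have := hlamN.2 ⟨c • f, hmem, rfl⟩
  rwa [rayleigh_smul ω κ ϱ c hc.ne' f] at this

lemma zero_spread {V : Type*} (G : SimpleGraph V) (g : V → ℝ)
    (hstep : ∀ a b, G.Adj a b → g a = 0 → g b = 0) {a b : V}
    (h : G.Reachable a b) (ha : g a = 0) : g b = 0 := by
  obtain ⟨w⟩ := h
  induction w with
  | nil => exact ha
  | cons h w ih => exact ih (hstep _ _ h ha)

lemma nodal_card_of {V : Type*} [Fintype V] (G : SimpleGraph V) (g : V → ℝ)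
    (hbot : ∀ u v, ¬ (posGraph G g).Adj u v) (hnz : ∀ u, g u ≠ 0) :
    nodalCount G g = Fintype.card V := by
  classical
  have hbot' : posGraph G g = ⊥ := by
    ext u v; simp only [SimpleGraph.bot_adj, iff_false]; exact hbot u v
  unfold nodalCount
  have hset : {c : (posGraph G g).ConnectedComponent |
      ∀ u, (posGraph G g).connectedComponentMk u = c → g u ≠ 0} = Set.univ := by
    ext c
    simp only [Set.mem_setOf_eq, Set.mem_univ, iff_true]
    exact fun u _ => hnz u
  rw [hset, Set.ncard_univ]
  have hbij : Function.Bijective ((posGraph G g).connectedComponentMk) := by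
    constructor
    · intro a b hab
      have hr := SimpleGraph.ConnectedComponent.exact hab
      rw [hbot'] at hr
      exact SimpleGraph.reachable_bot.mp hr
    · exact fun c => Quot.exists_rep c
  rw [← Nat.card_eq_of_bijective _ hbij, Nat.card_eq_fintype_card]

lemma of_nodal_card {V : Type*} [Fintype V] (G : SimpleGraph V) (f : V → ℝ)
    (hn : nodalCount G f = Fintype.card V) :
    (∀ u, f u ≠ 0) ∧ ∀ u v, G.Adj u v → f u * f v < 0 := by
  classical
  set H := posGraph G f with hH
  set Sc := {c : H.ConnectedComponent |
    ∀ u, H.connectedComponentMk u = c → f u ≠ 0} with hSc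
  have hsurj : Function.Surjective H.connectedComponentMk := fun c => Quot.exists_rep c
  have hfin : (Set.univ : Set H.ConnectedComponent).Finite := Set.finite_univ
  have hcard : Nat.card H.ConnectedComponent ≤ Fintype.card V := by
    rw [← Nat.card_eq_fintype_card]
    exact Nat.card_le_card_of_surjective _ hsurj
  have h1 : Sc.ncard ≤ Nat.card H.ConnectedComponent := by
    rw [← Set.ncard_univ]
    exact Set.ncard_le_ncard (Set.subset_univ _) hfin
  have hn' : Sc.ncard = Fintype.card V := hn
  have hSceq : Sc = Set.univ := by
    apply Set.eq_of_subset_of_ncard_le (Set.subset_univ _) _ hfin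
    rw [Set.ncard_univ, hn']
    exact hcard
  have hnz : ∀ u, f u ≠ 0 := by
    intro u
    have hmem : H.connectedComponentMk u ∈ Sc := by rw [hSceq]; exact Set.mem_univ _
    exact hmem u rfl
  have hinj : Function.Injective H.connectedComponentMk := by
    have hge : Fintype.card V ≤ Nat.card H.ConnectedComponent := hn' ▸ h1
    exact (hsurj.bijective_of_nat_card_le
      (by rw [Nat.card_eq_fintype_card]; exact hge)).injective
  refine ⟨hnz, ?_⟩
  intro u v huv
  have hne : f u * f v ≠ 0 := mul_ne_zero (hnz u) (hnz v)
  rcases hne.lt_or_gt with h | h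
  · exact h
  · exfalso
    have hadj : H.Adj u v := show G.Adj u v ∧ 0 < f u * f v from ⟨huv, h⟩
    have := hinj (SimpleGraph.ConnectedComponent.sound hadj.reachable)
    exact G.ne_of_adj huv this

/-- a connected graph is bipartite iff some eigenfunction of the largest
variational eigenvalue `λ_N = max_{f ∈ 𝒮_p} ℛ(f)` induces exactly `N` nodal domains. -/
theorem stmt5 {V : Type*} [Fintype V]
    (G : SimpleGraph V) (ω : V → V → ℝ) (κ ϱ : V → ℝ) (p : ℝ) (hp : 1 < p)
    (hωsymm : ∀ u v, ω u v = ω v u)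
    (hωpos : ∀ u v, G.Adj u v → 0 < ω u v)
    (hωzero : ∀ u v, ¬ G.Adj u v → ω u v = 0)
    (hϱpos : ∀ u, 0 < ϱ u)
    (hconn : G.Connected)
    (lamN : ℝ) (hlamN : IsGreatest (rayleigh ω κ ϱ p '' pSphere V p) lamN) :
    (∃ S : Set V, ∀ u v, G.Adj u v → (u ∈ S ↔ v ∉ S)) ↔
      ∃ f : V → ℝ, IsEigenpair ω κ ϱ p lamN f ∧ nodalCount G f = Fintype.card V := by
    classical
  constructor
  · rintro ⟨S, hS⟩
    obtain ⟨f0, hf0mem, hf0R⟩ := hlamN.1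
    have hf0ne : f0 ≠ 0 := sphere_ne_zero hp hf0mem
    set ε : V → ℝ := fun u => if u ∈ S then 1 else -1 with hε
    have hεabs : ∀ u, |ε u| = 1 := fun u => by by_cases h : u ∈ S <;> simp [hε, h]
    have hεsq : ∀ u, ε u * ε u = 1 := fun u => by by_cases h : u ∈ S <;> simp [hε, h]
    have hεne : ∀ u, ε u ≠ 0 := fun u => by by_cases h : u ∈ S <;> simp [hε, h]
    have hflip : ∀ u v, G.Adj u v → ε v = -ε u := by
      intro u v h
      have h2 := hS u v h
      by_cases hu : u ∈ S
      · have hv : v ∉ S := h2.mp hu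
        simp [hε, hu, hv]
      · have hv : v ∈ S := by
          by_contra hv
          exact hu (h2.mpr hv)
        simp [hε, hu, hv]
    set g : V → ℝ := fun u => ε u * |f0 u| with hg
    have hgabs : ∀ u, |g u| = |f0 u| := fun u => by
      rw [hg]; simp only
      rw [abs_mul, hεabs, abs_abs, one_mul]
    have hgmem : g ∈ pSphere V p := by
      unfold pSphere at hf0mem ⊢
      simp only [Set.mem_setOf_eq] at hf0mem ⊢
      rw [← hf0mem]
      exact Finset.sum_congr rfl fun u _ => by rw [hgabs u]
    have hgne : g ≠ 0 := sphere_ne_zero hp hgmem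
    have hDeq : ∑ u : V, ϱ u * |g u| ^ p = ∑ u : V, ϱ u * |f0 u| ^ p :=
      Finset.sum_congr rfl fun u _ => by rw [hgabs u]
    have hκeq : ∑ u : V, κ u * |g u| ^ p = ∑ u : V, κ u * |f0 u| ^ p :=
      Finset.sum_congr rfl fun u _ => by rw [hgabs u]
    have hRge : lamN ≤ rayleigh ω κ ϱ p g := by
      rw [← hf0R]
      unfold rayleigh
      rw [hDeq, hκeq]
      have hDpos : 0 < ∑ u : V, ϱ u * |f0 u| ^ p := denom_pos hp hϱpos hf0ne
      have hedge : ∀ u v : V, ω u v * |f0 u - f0 v| ^ p ≤ ω u v * |g u - g v| ^ p := by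
        intro u v
        by_cases h : G.Adj u v
        · apply mul_le_mul_of_nonneg_left _ (hωpos u v h).le
          apply Real.rpow_le_rpow (abs_nonneg _) _ (by linarith : (0:ℝ) ≤ p)
          have h1 : g u - g v = ε u * (|f0 u| + |f0 v|) := by
            rw [hg]; simp only
            rw [hflip u v h]; ring
          rw [h1, abs_mul, hεabs, one_mul, abs_of_nonneg (add_nonneg (abs_nonneg (f0 u)) (abs_nonneg (f0 v)))]
          exact abs_sub (f0 u) (f0 v)
        · rw [hωzero u v h]; simp
      have hnum : (1:ℝ)/2 * (∑ u : V, ∑ v : V, ω u v * |f0 u - f0 v| ^ p)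
            + ∑ u : V, κ u * |f0 u| ^ p
          ≤ (1:ℝ)/2 * (∑ u : V, ∑ v : V, ω u v * |g u - g v| ^ p)
            + ∑ u : V, κ u * |f0 u| ^ p := by
        have hss := Finset.sum_le_sum
          (fun u (_ : u ∈ Finset.univ) => Finset.sum_le_sum
            (fun v (_ : v ∈ Finset.univ) => hedge u v))
        linarith
      exact (div_le_div_iff_of_pos_right hDpos).mpr hnum
    have hRle : rayleigh ω κ ϱ p g ≤ lamN := hlamN.2 ⟨g, hgmem, rfl⟩
    have hRg : rayleigh ω κ ϱ p g = lamN := le_antisymm hRle hRge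
    have heig := maximizer_eigen ω κ ϱ hp hωsymm hϱpos lamN g hgmem
      (fun f hf => rayleigh_le ω κ ϱ hp lamN hlamN f hf) hRg
    have hωnn : ∀ u v, 0 ≤ ω u v := by
      intro u v
      by_cases h : G.Adj u v
      · exact (hωpos u v h).le
      · rw [hωzero u v h]
    have hphi0 : phiP p 0 = 0 := by simp [phiP]
    have hstep : ∀ a b, G.Adj a b → g a = 0 → g b = 0 := by
      intro a b hab ha
      have heq := heig a
      unfold genLap at heq
      rw [ha, hphi0, mul_zero, mul_zero, add_zero, mul_zero] at heq
      have hsum : ∑ v : V, ε a * (ω a v * phiP p (0 - g v)) = 0 := by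
        rw [← Finset.mul_sum, heq, mul_zero]
      have hnn : ∀ v ∈ Finset.univ (α := V), 0 ≤ ε a * (ω a v * phiP p (0 - g v)) := by
        intro v _
        by_cases h : G.Adj a v
        · have h2 : 0 - g v = ε a * |f0 v| := by
            rw [hg]; simp only
            rw [hflip a v h]; ring
          rw [h2, phiP_pm p _ _ (hεabs a)]
          have hre : ε a * (ω a v * (ε a * phiP p |f0 v|))
              = (ε a * ε a) * (ω a v * phiP p |f0 v|) := by ring
          rw [hre, hεsq a, one_mul]
          exact mul_nonneg (hωnn a v) (phiP_abs_nonneg p (f0 v))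
        · rw [hωzero a v h]; simp
      have hall := (Finset.sum_eq_zero_iff_of_nonneg hnn).mp hsum b (Finset.mem_univ b)
      have h2 : 0 - g b = ε a * |f0 b| := by
        rw [hg]; simp only
        rw [hflip a b hab]; ring
      rw [h2, phiP_pm p _ _ (hεabs a)] at hall
      have h4 : ω a b * phiP p |f0 b| = ε a * (ω a b * (ε a * phiP p |f0 b|)) := by
        linear_combination (-(ω a b * phiP p |f0 b|)) * hεsq a
      have h5 : ω a b * phiP p |f0 b| = 0 := by rw [h4, hall]
      have h6 : phiP p |f0 b| = 0 :=
        (mul_eq_zero.mp h5).resolve_left (hωpos a b hab).ne'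
      have h7 : f0 b = 0 := abs_eq_zero.mp (phiP_eq_zero_iff.mp h6)
      rw [hg]; simp only
      rw [h7]; simp
    have hnz : ∀ u, g u ≠ 0 := by
      intro u hu
      apply hgne
      funext w
      have := zero_spread G g hstep (hconn.preconnected u w) hu
      simpa using this
    have hbot : ∀ u v, ¬ (posGraph G g).Adj u v := by
      intro u v hh
      obtain ⟨hadj, hpos⟩ : G.Adj u v ∧ 0 < g u * g v := hh
      have h1 : g u * g v = -((ε u * ε u) * (|f0 u| * |f0 v|)) := by
        rw [hg]; simp only
        rw [hflip u v hadj]; ring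
      rw [hεsq u, one_mul] at h1
      nlinarith [abs_nonneg (f0 u), abs_nonneg (f0 v)]
    exact ⟨g, ⟨hgne, heig⟩, nodal_card_of G g hbot hnz⟩
  · rintro ⟨f, _, hn⟩
    obtain ⟨hnz, hneg⟩ := of_nodal_card G f hn
    refine ⟨{u | 0 < f u}, fun u v huv => ?_⟩
    have h := hneg u v huv
    simp only [Set.mem_setOf_eq]
    constructor
    · intro hu hv
      nlinarith
    · intro hv
      rcases (hnz u).lt_or_gt with h1 | h1
      · exfalso
        rcases (hnz v).lt_or_gt with h2 | h2
        · nlinarith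
        · exact hv h2
      · exact h1
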